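/- The sequence $Z_{n,n_0} = \sum_{j=0}^{n-n_0}\binom{2j}{j}\binom{2n-2j-2}{n-j-n_0}$ satisfies the recursion $Z_{n,n_0} = 4 Z_{n-1,n_0} + C^{n+n_0-3}_{n-n_0}$ for $n > n_0 \ge 2$, where $C^m_k$ are ballot numbers. -/

import Mathlib

open Finset PowerSeries

noncomputable def Cser : PowerSeries ℕ := PowerSeries.mk fun n => catalan n
noncomputable def Dser (a : ℕ) : PowerSeries ℕ := PowerSeries.mk fun j => (2*j+2*a).choose j
noncomputable def Bser (a : ℕ) : PowerSeries ℕ := PowerSeries.mk fun j => (2*j+2*a+1).choose j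
noncomputable def CBser : PowerSeries ℕ := PowerSeries.mk fun j => (2*j).choose j

lemma Cser_eq : Cser = 1 + PowerSeries.X * (Cser * Cser) := by
  ext n
  cases n with
  | zero => simp [Cser]
  | succ n =>
    rw [map_add, PowerSeries.coeff_succ_X_mul, PowerSeries.coeff_mul]
    simp [Cser, catalan_succ' n, PowerSeries.coeff_one]

lemma key (k : ℕ) : ∀ a : ℕ,
    (PowerSeries.coeff k) (Cser * Dser a) = (2*k+2*a+1).choose k ∧
    (PowerSeries.coeff k) (Cser * Bser a) = (2*k+2*a+2).choose k := by
  induction k using Nat.strong_induction_on with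
  | _ k IH =>
    intro a
    match k with
    | 0 =>
      simp [PowerSeries.coeff_mul, Finset.Nat.antidiagonal_zero, Cser, Dser, Bser]
    | Nat.succ k =>
      have hCD : Cser * Dser a = Dser a + PowerSeries.X * (Cser * (Cser * Dser a)) := by
        conv_lhs => rw [Cser_eq]
        ring
      have hCB : Cser * Bser a = Bser a + PowerSeries.X * (Cser * (Cser * Bser a)) := by
        conv_lhs => rw [Cser_eq]
        ring
      constructor
      · rw [hCD, map_add, PowerSeries.coeff_succ_X_mul, PowerSeries.coeff_mul]
        have : ∑ p ∈ HasAntidiagonal.antidiagonal k,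
            (PowerSeries.coeff p.1) Cser * (PowerSeries.coeff p.2) (Cser * Dser a)
            = ∑ p ∈ HasAntidiagonal.antidiagonal k,
              (PowerSeries.coeff p.1) Cser * (PowerSeries.coeff p.2) (Bser a) := by
          refine Finset.sum_congr rfl fun p hp => ?_
          have hle : p.2 ≤ k := by rw [HasAntidiagonal.mem_antidiagonal] at hp; omega
          rcases Nat.lt_or_ge p.2 (k+1) with h' | h'
          · rw [(IH p.2 h' a).1]; simp [Bser]
          · omega
        rw [this, ← PowerSeries.coeff_mul, (IH k (Nat.lt_succ_self k) a).2]
        simp only [Dser, PowerSeries.coeff_mk, Nat.succ_eq_add_one]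
        have h2 : 2*(k+1)+2*a+1 = (2*k+2*a+2) + 1 := by ring
        have h3 : 2*(k+1)+2*a = (2*k+2*a+2) := by ring
        rw [h2, h3]
        have hp : (2*k+2*a+2+1).choose (k+1) = (2*k+2*a+2).choose k + (2*k+2*a+2).choose (k+1) :=
          Nat.choose_succ_succ _ _
        omega
      · rw [hCB, map_add, PowerSeries.coeff_succ_X_mul, PowerSeries.coeff_mul]
        have : ∑ p ∈ HasAntidiagonal.antidiagonal k,
            (PowerSeries.coeff p.1) Cser * (PowerSeries.coeff p.2) (Cser * Bser a)
            = ∑ p ∈ HasAntidiagonal.antidiagonal k,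
              (PowerSeries.coeff p.1) Cser * (PowerSeries.coeff p.2) (Dser (a+1)) := by
          refine Finset.sum_congr rfl fun p hp => ?_
          have hle : p.2 ≤ k := by rw [HasAntidiagonal.mem_antidiagonal] at hp; omega
          rcases Nat.lt_or_ge p.2 (k+1) with h' | h'
          · rw [(IH p.2 h' a).2]
            have : 2*p.2+2*a+2 = 2*p.2+2*(a+1) := by ring
            simp [Dser, this]
          · omega
        rw [this, ← PowerSeries.coeff_mul, (IH k (Nat.lt_succ_self k) (a+1)).1]
        simp only [Bser, PowerSeries.coeff_mk, Nat.succ_eq_add_one]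
        have h2 : 2*(k+1)+2*a+2 = (2*k+2*a+3) + 1 := by ring
        have h3 : 2*(k+1)+2*a+1 = 2*k+2*a+3 := by ring
        have h4 : 2*k+2*(a+1)+1 = 2*k+2*a+3 := by ring
        rw [h2, h3, h4]
        have hp : (2*k+2*a+3+1).choose (k+1) = (2*k+2*a+3).choose k + (2*k+2*a+3).choose (k+1) :=
          Nat.choose_succ_succ _ _
        omega

lemma four_cb (j : ℕ) :
    4 * (2*j).choose j = (2*(j+1)).choose (j+1) + 2 * catalan j := by
  apply Nat.eq_of_mul_eq_mul_left (Nat.succ_pos j)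
  have h1 := Nat.succ_mul_centralBinom_succ j
  have h2 := succ_mul_catalan_eq_centralBinom j
  have e1 : Nat.centralBinom j = (2*j).choose j := rfl
  have e2 : Nat.centralBinom (j+1) = (2*(j+1)).choose (j+1) := rfl
  rw [e1, e2] at h1
  rw [e1] at h2
  show (j+1) * (4 * (2*j).choose j) = (j+1) * ((2*(j+1)).choose (j+1) + 2 * catalan j)
  calc (j+1) * (4 * (2*j).choose j)
      = 2*(2*j+1) * (2*j).choose j + 2 * ((2*j).choose j) := by ring
    _ = (j+1) * ((2*(j+1)).choose (j+1)) + 2*((j+1) * catalan j) := by rw [h1, h2]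
    _ = (j+1) * ((2*(j+1)).choose (j+1) + 2 * catalan j) := by ring

lemma Emain (c m : ℕ) :
    (PowerSeries.coeff (m+1)) (CBser * Dser c) + 2 * (2*m+2*c+1).choose m
    = 4 * (PowerSeries.coeff m) (CBser * Dser c) + (2*(m+1)+2*c).choose (m+1) := by
  have hkey := (key m c).1
  rw [PowerSeries.coeff_mul] at hkey
  simp only [Cser, PowerSeries.coeff_mk] at hkey
  rw [PowerSeries.coeff_mul, PowerSeries.coeff_mul, Finset.Nat.sum_antidiagonal_succ,
    Finset.mul_sum]
  have hterm : ∑ p ∈ HasAntidiagonal.antidiagonal m,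
      4 * ((PowerSeries.coeff p.1) CBser * (PowerSeries.coeff p.2) (Dser c))
      = ∑ p ∈ HasAntidiagonal.antidiagonal m,
        ((PowerSeries.coeff (p.1+1)) CBser * (PowerSeries.coeff p.2) (Dser c)
          + 2 * (catalan p.1 * (PowerSeries.coeff p.2) (Dser c))) := by
    refine Finset.sum_congr rfl fun p _ => ?_
    simp only [CBser, PowerSeries.coeff_mk]
    calc 4 * ((2*p.1).choose p.1 * (PowerSeries.coeff p.2) (Dser c))
        = (4 * (2*p.1).choose p.1) * (PowerSeries.coeff p.2) (Dser c) := by ring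
      _ = ((2*(p.1+1)).choose (p.1+1) + 2 * catalan p.1)
            * (PowerSeries.coeff p.2) (Dser c) := by rw [four_cb]
      _ = _ := by ring
  rw [hterm, Finset.sum_add_distrib, ← Finset.mul_sum, hkey]
  simp only [CBser, Dser, PowerSeries.coeff_mk]
  have h00 : (2*0).choose 0 = 1 := rfl
  rw [h00]
  omega

/-- Ballot numbers `C^n_k = C(n+k, n) - C(n+k, n+1)`. -/
def ballot (n k : ℕ) : ℕ := (n + k).choose n - (n + k).choose (n + 1)

/-- The partition function of the `D`-TASEP with `n` sites and `n₀` zeros. -/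
def Z (n n₀ : ℕ) : ℕ :=
  ∑ j ∈ Finset.range (n - n₀ + 1), (2 * j).choose j * (2 * n - 2 * j - 2).choose (n - j - n₀)

lemma Zcoeff (c m : ℕ) :
    Z (c+2+m) (c+2) = (PowerSeries.coeff m) (CBser * Dser (c+1)) := by
  rw [PowerSeries.coeff_mul, Finset.Nat.sum_antidiagonal_eq_sum_range_succ_mk]
  unfold Z
  have hr : c+2+m - (c+2) + 1 = m + 1 := by omega
  rw [hr]
  refine Finset.sum_congr rfl fun j hj => ?_
  rw [Finset.mem_range] at hj
  simp only [CBser, Dser, PowerSeries.coeff_mk]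
  have h1 : 2*(c+2+m)-2*j-2 = 2*(m-j)+2*(c+1) := by omega
  have h2 : c+2+m-j-(c+2) = m-j := by omega
  rw [h1, h2]

/-- The recursion `Z_{n,n₀} = 4 Z_{n-1,n₀} + C^{n+n₀-3}_{n-n₀}` for `n > n₀ ≥ 2`. -/
theorem Z_recursion (n n₀ : ℕ) (h2 : 2 ≤ n₀) (h : n₀ < n) :
    Z n n₀ = 4 * Z (n - 1) n₀ + ballot (n + n₀ - 3) (n - n₀) := by
  obtain ⟨c, rfl⟩ : ∃ c, n₀ = c + 2 := ⟨n₀ - 2, by omega⟩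
  obtain ⟨m, rfl⟩ : ∃ m, n = c + 2 + (m + 1) := ⟨n - (c + 2) - 1, by omega⟩
  have e1 : c + 2 + (m+1) - 1 = c + 2 + m := by omega
  rw [e1, Zcoeff c (m+1), Zcoeff c m]
  have eb : ballot (c+2+(m+1) + (c+2) - 3) (c+2+(m+1) - (c+2))
      = (2*c+2*m+3).choose (m+1) - (2*c+2*m+3).choose m := by
    have ha : c+2+(m+1) + (c+2) - 3 = 2*c+m+2 := by omega
    have hb : c+2+(m+1) - (c+2) = m+1 := by omega
    rw [ha, hb]
    unfold ballot
    have hc : 2*c+m+2 + (m+1) = 2*c+2*m+3 := by omega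
    rw [hc]
    have b1 : (2*c+2*m+3).choose (2*c+m+2) = (2*c+2*m+3).choose (m+1) := by
      rw [show 2*c+m+2 = (2*c+2*m+3) - (m+1) by omega]
      exact Nat.choose_symm (by omega)
    have b2 : (2*c+2*m+3).choose (2*c+m+2+1) = (2*c+2*m+3).choose m := by
      rw [show 2*c+m+2+1 = (2*c+2*m+3) - m by omega]
      exact Nat.choose_symm (by omega)
    rw [b1, b2]
  rw [eb]
  have hE := Emain (c+1) m
  rw [show 2*m+2*(c+1)+1 = 2*c+2*m+3 by ring, show 2*(m+1)+2*(c+1) = 2*c+2*m+4 by ring] at hE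
  have hp : (2*c+2*m+4).choose (m+1) = (2*c+2*m+3).choose m + (2*c+2*m+3).choose (m+1) := by
    rw [show 2*c+2*m+4 = (2*c+2*m+3)+1 by omega]
    exact Nat.choose_succ_succ _ _
  have hmono : (2*c+2*m+3).choose m ≤ (2*c+2*m+3).choose (m+1) :=
    Nat.choose_le_succ_of_lt_half_left (by omega)
  omega
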